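/- Let f : ℝ² → ℝ be a non-degenerate weighted homogeneous polynomial of type (d; w₁, w₂), and suppose there exists a point a = (a₁, a₂) with a₂ ≠ 0 and ∂f/∂x₁(a₁, a₂) = 0. Then for every λ < (d − w₂)/w₂ there do NOT exist C > 0 and a neighborhood U of 0 with ‖∇f(x)‖ ≥ C‖x‖^λ for all x ∈ U; consequently the Łojasiewicz exponent satisfies L(f) ≥ d/w₂ − 1. -/

import Mathlib

open MvPolynomial

/-- Euclidean norm of the gradient of a polynomial `f` at `x`. -/
noncomputable def gradNorm {n : ℕ} (f : MvPolynomial (Fin n) ℝ) (x : Fin n → ℝ) : ℝ :=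
  Real.sqrt (∑ i, (eval x (pderiv i f)) ^ 2)

/-- Euclidean norm on `Fin n → ℝ`. -/
noncomputable def eNorm {n : ℕ} (x : Fin n → ℝ) : ℝ :=
  Real.sqrt (∑ i, (x i) ^ 2)

/-- `f` is weighted homogeneous of type `(d; w)`: every monomial `x^α` appearing in `f`
satisfies `∑ i, α i * w i = d`. -/
def IsWeightedHomog {n : ℕ} (f : MvPolynomial (Fin n) ℝ) (w : Fin n → ℕ) (d : ℕ) : Prop :=
  ∀ α ∈ f.support, ∑ i, α i * w i = d

/-- `f` is non-degenerate (isolated singularity at the origin): in some neighborhood of `0`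
the gradient of `f` vanishes only at the origin. -/
def Nondeg {n : ℕ} (f : MvPolynomial (Fin n) ℝ) : Prop :=
  ∃ U ∈ nhds (0 : Fin n → ℝ), ∀ x ∈ U, (∀ i, eval x (pderiv i f) = 0) → x = 0

/-- The Łojasiewicz inequality `‖∇f(x)‖ ≥ C ‖x‖^lam` holds near `0` for some `C > 0`. -/
def LojIneq {n : ℕ} (f : MvPolynomial (Fin n) ℝ) (lam : ℝ) : Prop :=
  ∃ C > (0 : ℝ), ∃ U ∈ nhds (0 : Fin n → ℝ), ∀ x ∈ U, C * eNorm x ^ lam ≤ gradNorm f x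

/-- The Łojasiewicz exponent of `f`: the infimum of all `lam > 0` for which the
Łojasiewicz inequality holds near the origin. -/
noncomputable def lojExp {n : ℕ} (f : MvPolynomial (Fin n) ℝ) : ℝ :=
  sInf {lam : ℝ | 0 < lam ∧ LojIneq f lam}

/-- The weighted "radius" `ρ(x) = (∑ i |x i| ^ (2 / w i)) ^ (1/2)`. -/
noncomputable def rho {n : ℕ} (w : Fin n → ℕ) (x : Fin n → ℝ) : ℝ :=
  Real.sqrt (∑ i, |x i| ^ ((2 : ℝ) / (w i : ℝ)))

/-- The weighted norm of the gradient:
`‖grad_w f(x)‖_w = (∑ i ρ(x)^(2 wᵢ) |∂f/∂xᵢ(x)|²)^(1/2)`. -/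
noncomputable def wGradNorm {n : ℕ} (w : Fin n → ℕ) (f : MvPolynomial (Fin n) ℝ)
    (x : Fin n → ℝ) : ℝ :=
  Real.sqrt (∑ i, rho w x ^ (2 * w i) * (eval x (pderiv i f)) ^ 2)

-- auxiliary lemmas

lemma eval_monomial_univ {n : ℕ} (x : Fin n → ℝ) (v : Fin n →₀ ℕ) (c : ℝ) :
    eval x (monomial v c) = c * ∏ i, x i ^ v i := by
  rw [eval_monomial]
  congr 1
  exact Finsupp.prod_fintype _ _ (fun i => pow_zero _)

lemma eval_wscale_monomial {n : ℕ} (w : Fin n → ℕ) (t : ℝ) (x : Fin n → ℝ)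
    (v : Fin n →₀ ℕ) (c : ℝ) :
    eval (fun j => t ^ w j * x j) (monomial v c)
      = t ^ (∑ j, v j * w j) * eval x (monomial v c) := by
  rw [eval_monomial_univ, eval_monomial_univ]
  rw [show (∑ j, v j * w j) = ∑ j, w j * v j from
    Finset.sum_congr rfl (fun j _ => mul_comm _ _)]
  simp_rw [mul_pow, ← pow_mul]
  rw [Finset.prod_mul_distrib, Finset.prod_pow_eq_pow_sum]
  ring

lemma pderiv_wscale_monomial {n : ℕ} (w : Fin n → ℕ) (d : ℕ) (t : ℝ) (x : Fin n → ℝ)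
    (i : Fin n) (v : Fin n →₀ ℕ) (c : ℝ) (hv : ∑ j, v j * w j = d) :
    t ^ w i * eval (fun j => t ^ w j * x j) (pderiv i (monomial v c)) =
      t ^ d * eval x (pderiv i (monomial v c)) := by
  rw [pderiv_monomial]
  rcases Nat.eq_zero_or_pos (v i) with h0 | hpos
  · simp [h0]
  · rw [eval_wscale_monomial, ← mul_assoc, ← pow_add]
    have hle : Finsupp.single i 1 ≤ v := Finsupp.single_le_iff.mpr hpos
    have hsplit : (∑ j, v j * w j)
        = (∑ j, ((v - Finsupp.single i 1 : Fin n →₀ ℕ)) j * w j)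
          + ∑ j, (Finsupp.single i 1 : Fin n →₀ ℕ) j * w j := by
      rw [← Finset.sum_add_distrib]
      refine Finset.sum_congr rfl fun j _ => ?_
      rw [← add_mul, ← Finsupp.add_apply, tsub_add_cancel_of_le hle]
    have hsingle : (∑ j, (Finsupp.single i 1 : Fin n →₀ ℕ) j * w j) = w i := by
      simp [Finsupp.single_apply]
    have hwi : w i + (∑ j, ((v - Finsupp.single i 1 : Fin n →₀ ℕ)) j * w j) = d := by
      rw [← hv, hsplit, hsingle]; ring
    rw [hwi]

lemma eval_pderiv_wscale {n : ℕ} {w : Fin n → ℕ} {d : ℕ} {f : MvPolynomial (Fin n) ℝ}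
    (hf : IsWeightedHomog f w d) (t : ℝ) (x : Fin n → ℝ) (i : Fin n) :
    t ^ w i * eval (fun j => t ^ w j * x j) (pderiv i f) = t ^ d * eval x (pderiv i f) := by
  conv_lhs => rw [f.as_sum]
  conv_rhs => rw [f.as_sum]
  simp only [map_sum, Finset.mul_sum]
  exact Finset.sum_congr rfl fun v hv => pderiv_wscale_monomial w d t x i v _ (hf v hv)

lemma grad_ne_zero {n : ℕ} {w : Fin n → ℕ} {d : ℕ} {f : MvPolynomial (Fin n) ℝ}
    (hw : ∀ i, 0 < w i) (hf : IsWeightedHomog f w d) (hnd : Nondeg f)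
    {u : Fin n → ℝ} (hu : u ≠ 0) (hgrad : ∀ i, eval u (pderiv i f) = 0) : False := by
  obtain ⟨U, hU, hU0⟩ := hnd
  have hc : Continuous (fun t : ℝ => fun j => t ^ w j * u j) :=
    continuous_pi fun j => (continuous_pow (w j)).mul continuous_const
  have h0 : (fun j => (0:ℝ) ^ w j * u j) = 0 := by
    funext j; simp [zero_pow (hw j).ne']
  have hten := hc.tendsto 0
  rw [h0] at hten
  have hev : ∀ᶠ t in nhdsWithin (0:ℝ) (Set.Ioi 0),
      (fun j => t ^ w j * u j) ∈ U :=
    (hten.mono_left nhdsWithin_le_nhds).eventually_mem hU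
  obtain ⟨t, htU, ht⟩ := (hev.and self_mem_nhdsWithin).exists
  have htpos : (0:ℝ) < t := ht
  have hzero : ∀ i, eval (fun j => t ^ w j * u j) (pderiv i f) = 0 := by
    intro i
    have := eval_pderiv_wscale hf t u i
    rw [hgrad i, mul_zero] at this
    have htw : t ^ w i ≠ 0 := pow_ne_zero _ htpos.ne'
    exact (mul_eq_zero.mp this).resolve_left htw
  have := hU0 _ htU hzero
  obtain ⟨j, hj⟩ := Function.ne_iff.mp hu
  have := congrFun this j
  simp only [Pi.zero_apply, mul_eq_zero] at this
  rcases this with h | h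
  · exact pow_ne_zero _ htpos.ne' h
  · exact hj h

lemma rho_zero {n : ℕ} {w : Fin n → ℕ} (hw : ∀ i, 0 < w i) : rho w (0 : Fin n → ℝ) = 0 := by
  have h : ∀ i : Fin n, ((0:ℝ)) ^ ((2:ℝ) / (w i : ℝ)) = 0 := fun i =>
    Real.zero_rpow (div_ne_zero two_ne_zero (Nat.cast_ne_zero.mpr (hw i).ne'))
  simp [rho, h]

lemma rho_pos {n : ℕ} {w : Fin n → ℕ} {x : Fin n → ℝ} (hx : x ≠ 0) : 0 < rho w x := by
  obtain ⟨j, hj⟩ := Function.ne_iff.mp hx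
  apply Real.sqrt_pos.mpr
  have hterm : (0:ℝ) < |x j| ^ ((2:ℝ) / (w j : ℝ)) :=
    Real.rpow_pos_of_pos (abs_pos.mpr hj) _
  calc (0:ℝ) < |x j| ^ ((2:ℝ) / (w j : ℝ)) := hterm
    _ ≤ _ := Finset.single_le_sum (f := fun i => |x i| ^ ((2:ℝ) / (w i : ℝ)))
        (fun i _ => Real.rpow_nonneg (abs_nonneg _) _) (Finset.mem_univ j)

lemma continuous_rho {n : ℕ} (w : Fin n → ℕ) (hw : ∀ i, 0 < w i) : Continuous (rho w) := by
  apply Real.continuous_sqrt.comp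
  apply continuous_finset_sum
  intro i _
  exact ((continuous_abs.comp (continuous_apply i)).rpow_const (fun x => Or.inr (by positivity)))

lemma rho_wscale {n : ℕ} {w : Fin n → ℕ} (hw : ∀ i, 0 < w i) {t : ℝ} (ht : 0 ≤ t)
    (x : Fin n → ℝ) : rho w (fun j => t ^ w j * x j) = t * rho w x := by
  have hterm : ∀ j : Fin n, |t ^ w j * x j| ^ ((2:ℝ)/(w j:ℝ))
      = t ^ (2:ℕ) * |x j| ^ ((2:ℝ)/(w j:ℝ)) := by
    intro j
    rw [abs_mul, Real.mul_rpow (abs_nonneg _) (abs_nonneg _), abs_pow, abs_of_nonneg ht,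
      ← Real.rpow_natCast t (w j), ← Real.rpow_mul ht]
    have hwj : ((w j : ℝ)) ≠ 0 := Nat.cast_ne_zero.mpr (hw j).ne'
    rw [show (w j : ℝ) * ((2:ℝ) / (w j : ℝ)) = 2 by field_simp]
    rw [show t ^ (2:ℝ) = t ^ (2:ℕ) by rw [← Real.rpow_natCast t 2]; norm_num]
  unfold rho
  rw [Finset.sum_congr rfl (fun j _ => hterm j), ← Finset.mul_sum,
    Real.sqrt_mul (by positivity), Real.sqrt_sq ht]

lemma abs_le_one_of_rho_eq_one {n : ℕ} {w : Fin n → ℕ} (hw : ∀ i, 0 < w i)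
    {u : Fin n → ℝ} (hu : rho w u = 1) (i : Fin n) : |u i| ≤ 1 := by
  have hsum : (∑ j, |u j| ^ ((2:ℝ) / (w j : ℝ))) = 1 := by
    have := congrArg (· ^ 2) hu
    simpa [rho, Real.sq_sqrt (Finset.sum_nonneg fun j _ => Real.rpow_nonneg (abs_nonneg _) _)]
      using this
  have hterm : |u i| ^ ((2:ℝ) / (w i : ℝ)) ≤ 1 := by
    rw [← hsum]
    exact Finset.single_le_sum (f := fun j => |u j| ^ ((2:ℝ) / (w j : ℝ)))
      (fun j _ => Real.rpow_nonneg (abs_nonneg _) _) (Finset.mem_univ i)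
  by_contra h
  push_neg at h
  have : 1 < |u i| ^ ((2:ℝ) / (w i : ℝ)) := by
    rw [Real.one_lt_rpow_iff_of_pos (lt_trans one_pos h)]
    exact Or.inl ⟨h, div_pos two_pos (by exact_mod_cast hw i)⟩
  linarith

lemma continuous_gradNorm {n : ℕ} (f : MvPolynomial (Fin n) ℝ) : Continuous (gradNorm f) := by
  apply Real.continuous_sqrt.comp
  apply continuous_finset_sum
  intro i _
  exact (MvPolynomial.continuous_eval _).pow 2

lemma gradNorm_eq_zero_iff {n : ℕ} {f : MvPolynomial (Fin n) ℝ} {x : Fin n → ℝ} :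
    gradNorm f x = 0 ↔ ∀ i, eval x (pderiv i f) = 0 := by
  unfold gradNorm
  rw [Real.sqrt_eq_zero (Finset.sum_nonneg fun i _ => sq_nonneg _)]
  constructor
  · intro h i
    have := (Finset.sum_eq_zero_iff_of_nonneg (fun j _ => sq_nonneg _)).mp h i (Finset.mem_univ i)
    exact pow_eq_zero_iff (by norm_num) |>.mp this
  · intro h
    apply Finset.sum_eq_zero
    intro i _
    rw [h i]; ring

lemma loj_homog (d w₁ w₂ : ℕ) (hd : 0 < d) (hw₁ : 0 < w₁) (hw₂ : 0 < w₂)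
    (f : MvPolynomial (Fin 2) ℝ) (hhom : IsWeightedHomog f ![w₁, w₂] d)
    (hnd : Nondeg f) : LojIneq f (d : ℝ) := by
  set w : Fin 2 → ℕ := ![w₁, w₂] with hwdef
  have hw : ∀ i, 0 < w i := by
    intro i; fin_cases i <;> simpa [w]
  set K : Set (Fin 2 → ℝ) := {u | rho w u = 1} with hKdef
  have hKclosed : IsClosed K := by
    have : K = rho w ⁻¹' {1} := by ext u; simp [hKdef]
    rw [this]
    exact isClosed_singleton.preimage (continuous_rho w hw)
  have hKsub : K ⊆ Set.pi Set.univ (fun _ : Fin 2 => Set.Icc (-1:ℝ) 1) := by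
    intro u hu i _
    exact abs_le.mp (abs_le_one_of_rho_eq_one hw hu i)
  have hKcpt : IsCompact K :=
    (isCompact_univ_pi fun _ => isCompact_Icc).of_isClosed_subset hKclosed hKsub
  have hKne : K.Nonempty := by
    refine ⟨![1, 0], ?_⟩
    show rho w ![1, 0] = 1
    unfold rho
    rw [Fin.sum_univ_two]
    have h0 : |(![(1:ℝ), 0]) 0| ^ ((2:ℝ) / (w 0 : ℝ)) = 1 := by
      simp [Real.one_rpow]
    have h1 : |(![(1:ℝ), 0]) 1| ^ ((2:ℝ) / (w 1 : ℝ)) = 0 := by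
      have : ((2:ℝ) / (w 1 : ℝ)) ≠ 0 := div_ne_zero two_ne_zero (Nat.cast_ne_zero.mpr (hw 1).ne')
      simp [Real.zero_rpow this]
    rw [h0, h1]
    simp
  obtain ⟨u₀, hu₀K, hmin⟩ := hKcpt.exists_isMinOn hKne (continuous_gradNorm f).continuousOn
  set m := gradNorm f u₀ with hm
  have hu₀ne : u₀ ≠ 0 := by
    intro h
    have : rho w u₀ = 1 := hu₀K
    rw [h, rho_zero hw] at this
    norm_num at this
  have hmpos : 0 < m := by
    rcases eq_or_lt_of_le (Real.sqrt_nonneg (∑ i, (eval u₀ (pderiv i f)) ^ 2)) with h | h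
    · exfalso
      exact grad_ne_zero hw hhom hnd hu₀ne (gradNorm_eq_zero_iff.mp h.symm)
    · exact h
  have hC2 : (0:ℝ) < Real.sqrt 2 ^ d := by positivity
  refine ⟨m / Real.sqrt 2 ^ d, by positivity, {x : Fin 2 → ℝ | rho w x < 1}, ?_, ?_⟩
  · have hUopen : IsOpen {x : Fin 2 → ℝ | rho w x < 1} := by
      have : {x : Fin 2 → ℝ | rho w x < 1} = rho w ⁻¹' Set.Iio 1 := rfl
      rw [this]
      exact isOpen_Iio.preimage (continuous_rho w hw)
    refine hUopen.mem_nhds ?_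
    show rho w 0 < 1
    rw [rho_zero hw]; norm_num
  · intro x hx
    by_cases hx0 : x = 0
    · subst hx0
      have he0 : eNorm (0 : Fin 2 → ℝ) = 0 := by simp [eNorm]
      rw [he0, Real.zero_rpow (by exact_mod_cast hd.ne'), mul_zero]
      exact Real.sqrt_nonneg _
    · set t := rho w x with htdef
      have ht : 0 < t := rho_pos hx0
      have ht1 : t < 1 := hx
      set u : Fin 2 → ℝ := fun j => x j / t ^ w j with hudef
      have hxu : (fun j => t ^ w j * u j) = x := by
        funext j
        rw [hudef]
        field_simp
      have hru : rho w u = 1 := by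
        have := rho_wscale hw ht.le u
        rw [hxu] at this
        have h2 : t * 1 = t * rho w u := by rw [mul_one]; exact this
        exact (mul_left_cancel₀ ht.ne' h2).symm
      have hmu : m ≤ gradNorm f u := isMinOn_iff.mp hmin u hru
      have hkey : ∀ i, (t ^ d * eval u (pderiv i f)) ^ 2 ≤ (eval x (pderiv i f)) ^ 2 := by
        intro i
        have hid := eval_pderiv_wscale hhom t u i
        rw [hxu] at hid
        rw [← hid, mul_pow]
        have h1 : (t ^ w i) ^ 2 ≤ 1 := by
          apply pow_le_one₀ (by positivity)
          exact pow_le_one₀ ht.le ht1.le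
        exact mul_le_of_le_one_left (sq_nonneg _) h1
      have hgrad : t ^ d * gradNorm f u ≤ gradNorm f x := by
        unfold gradNorm
        rw [← Real.sqrt_sq (by positivity : (0:ℝ) ≤ t ^ d), ← Real.sqrt_mul (by positivity),
          Finset.mul_sum]
        apply Real.sqrt_le_sqrt
        apply Finset.sum_le_sum
        intro i _
        calc (t ^ d) ^ 2 * (eval u (pderiv i f)) ^ 2
            = (t ^ d * eval u (pderiv i f)) ^ 2 := by ring
          _ ≤ _ := hkey i
      have hxj : ∀ j, |x j| ≤ t := by
        intro j
        have hj : x j = t ^ w j * u j := (congrFun hxu j).symm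
        rw [hj]
        calc |t ^ w j * u j| = t ^ w j * |u j| := by
              rw [abs_mul, abs_of_nonneg (pow_nonneg ht.le _)]
          _ ≤ t ^ w j * 1 :=
              mul_le_mul_of_nonneg_left (abs_le_one_of_rho_eq_one hw hru j)
                (pow_nonneg ht.le _)
          _ = t ^ w j := mul_one _
          _ ≤ t := (pow_le_pow_of_le_one ht.le ht1.le (hw j)).trans_eq (pow_one t)
      have heN : eNorm x ≤ Real.sqrt 2 * t := by
        unfold eNorm
        rw [← Real.sqrt_sq ht.le, ← Real.sqrt_mul (by norm_num)]
        apply Real.sqrt_le_sqrt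
        rw [Fin.sum_univ_two]
        have h0 := hxj 0; have h1 := hxj 1
        nlinarith [abs_nonneg (x 0), abs_nonneg (x 1), sq_abs (x 0), sq_abs (x 1)]
      have heNn : (0:ℝ) ≤ eNorm x := Real.sqrt_nonneg _
      have heNpow : eNorm x ^ ((d:ℕ):ℝ) = eNorm x ^ d := Real.rpow_natCast _ d
      calc m / Real.sqrt 2 ^ d * eNorm x ^ ((d:ℕ):ℝ)
          = m / Real.sqrt 2 ^ d * eNorm x ^ d := by rw [heNpow]
        _ ≤ m / Real.sqrt 2 ^ d * (Real.sqrt 2 * t) ^ d := by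
            apply mul_le_mul_of_nonneg_left (pow_le_pow_left₀ heNn heN d) (by positivity)
        _ = m * t ^ d := by
            rw [mul_pow]
            field_simp
        _ = t ^ d * m := mul_comm _ _
        _ ≤ t ^ d * gradNorm f u := mul_le_mul_of_nonneg_left hmu (by positivity)
        _ ≤ gradNorm f x := hgrad

lemma le_d_of_pderiv_ne_zero {n : ℕ} {w : Fin n → ℕ} {d : ℕ} {f : MvPolynomial (Fin n) ℝ}
    (hf : IsWeightedHomog f w d) {i : Fin n} (h : pderiv i f ≠ 0) : w i ≤ d := by
  have hex : ∃ α ∈ f.support, α i ≠ 0 := by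
    by_contra hall
    push_neg at hall
    apply h
    conv_lhs => rw [f.as_sum]
    rw [map_sum]
    apply Finset.sum_eq_zero
    intro α hα
    rw [pderiv_monomial, hall α hα]
    simp
  obtain ⟨α, hαs, hαi⟩ := hex
  calc w i ≤ α i * w i := Nat.le_mul_of_pos_left _ (Nat.pos_of_ne_zero hαi)
    _ ≤ ∑ j, α j * w j := Finset.single_le_sum (f := fun j => α j * w j)
        (fun j _ => Nat.zero_le _) (Finset.mem_univ i)
    _ = d := hf α hαs

lemma no_small (K M e : ℝ) (hK : 0 < K) (he : 0 < e)
    (h : ∀ᶠ t in nhdsWithin (0:ℝ) (Set.Ioi 0), K ≤ M * t ^ e) : False := by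
  have hcont : ContinuousAt (fun t : ℝ => M * t ^ e) 0 :=
    continuousAt_const.mul (Real.continuousAt_rpow_const 0 e (Or.inr he.le))
  have h0 : M * (0:ℝ) ^ e = 0 := by rw [Real.zero_rpow he.ne']; ring
  have hten : Filter.Tendsto (fun t : ℝ => M * t ^ e) (nhdsWithin 0 (Set.Ioi 0)) (nhds 0) := by
    have h1 := (hcont.tendsto).mono_left (nhdsWithin_le_nhds (s := Set.Ioi (0:ℝ)))
    rwa [h0] at h1
  have hlt := hten.eventually_lt_const hK
  obtain ⟨t, h1, h2⟩ := (h.and hlt).exists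
  linarith

lemma div_step {t K M p q : ℝ} (ht : 0 < t) (h : K * t ^ p ≤ M * t ^ q) :
    K ≤ M * t ^ (q - p) := by
  have h2 := mul_le_mul_of_nonneg_right h (Real.rpow_nonneg ht.le (-p))
  calc K = K * (t ^ p * t ^ (-p)) := by
        rw [← Real.rpow_add ht, add_neg_cancel, Real.rpow_zero, mul_one]
    _ = K * t ^ p * t ^ (-p) := by ring
    _ ≤ M * t ^ q * t ^ (-p) := h2
    _ = M * t ^ (q - p) := by
        rw [mul_assoc, ← Real.rpow_add ht, ← sub_eq_add_neg]

lemma part1lemma (d w₁ w₂ : ℕ) (hd : 0 < d) (hw₁ : 0 < w₁) (hw₂ : 0 < w₂)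
    (f : MvPolynomial (Fin 2) ℝ) (hhom : IsWeightedHomog f ![w₁, w₂] d)
    (hnd : Nondeg f) (a : Fin 2 → ℝ) (ha1 : a 1 ≠ 0) (ha0 : eval a (pderiv 0 f) = 0)
    (hc : eval a (pderiv 1 f) ≠ 0)
    (lam : ℝ) (hlam : lam < ((d : ℝ) - w₂) / w₂) : ¬ LojIneq f lam := by
  rintro ⟨C, hC, U, hU, hloj⟩
  set δ : ℝ := (d : ℝ) - w₂ with hδdef
  have hw : ∀ i : Fin 2, 0 < (![w₁, w₂]) i := by
    intro i; fin_cases i <;> simpa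
  have hw1 : (![w₁, w₂]) 1 = w₂ := rfl
  have hw0 : (![w₁, w₂]) 0 = w₁ := rfl
  have hfne : pderiv 1 f ≠ 0 := fun h => hc (by rw [h]; simp)
  have hdw : w₂ ≤ d := le_d_of_pderiv_ne_zero hhom hfne
  have hδ0 : 0 ≤ δ := by
    rw [hδdef]
    have : (w₂:ℝ) ≤ (d:ℝ) := by exact_mod_cast hdw
    linarith
  -- basic eventually facts
  have hcont : Continuous (fun t : ℝ => (fun j => t ^ (![w₁, w₂]) j * a j)) :=
    continuous_pi fun j => (continuous_pow _).mul continuous_const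
  have hγ0 : (fun j => (0:ℝ) ^ (![w₁, w₂]) j * a j) = 0 := by
    funext j; simp [zero_pow (hw j).ne']
  have hmem : ∀ᶠ t in nhdsWithin (0:ℝ) (Set.Ioi 0),
      (fun j => t ^ (![w₁, w₂]) j * a j) ∈ U := by
    have h1 := hcont.tendsto 0
    rw [hγ0] at h1
    exact (h1.mono_left nhdsWithin_le_nhds).eventually_mem hU
  have hposev : ∀ᶠ t in nhdsWithin (0:ℝ) (Set.Ioi 0), (0:ℝ) < t :=
    Filter.eventually_of_mem self_mem_nhdsWithin (fun t ht => ht)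
  have hlt1 : ∀ᶠ t in nhdsWithin (0:ℝ) (Set.Ioi 0), t < 1 :=
    Filter.eventually_of_mem (nhdsWithin_le_nhds (Iio_mem_nhds one_pos)) (fun t ht => ht)
  -- lower bound for eNorm along the curve
  have hlowAll : ∀ t : ℝ, 0 ≤ t →
      t ^ w₂ * |a 1| ≤ eNorm (fun j => t ^ (![w₁, w₂]) j * a j) := by
    intro t ht
    have hnn : 0 ≤ t ^ w₂ * |a 1| := by positivity
    have hsq : (t ^ w₂ * |a 1|) ^ 2
        ≤ (t ^ (![w₁, w₂]) 0 * a 0) ^ 2 + (t ^ (![w₁, w₂]) 1 * a 1) ^ 2 := by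
      rw [hw0, hw1]
      have h1 : (t ^ w₂ * |a 1|) ^ 2 = (t ^ w₂ * a 1) ^ 2 := by
        rw [mul_pow, mul_pow, sq_abs]
      nlinarith [sq_nonneg (t ^ w₁ * a 0)]
    have : eNorm (fun j => t ^ (![w₁, w₂]) j * a j)
        = Real.sqrt ((t ^ (![w₁, w₂]) 0 * a 0) ^ 2 + (t ^ (![w₁, w₂]) 1 * a 1) ^ 2) := by
      unfold eNorm
      rw [Fin.sum_univ_two]
    rw [this]
    exact Real.le_sqrt_of_sq_le hsq
  have hupAll : ∀ t : ℝ, 0 ≤ t → t ≤ 1 →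
      eNorm (fun j => t ^ (![w₁, w₂]) j * a j)
        ≤ Real.sqrt (a 0 ^ 2 + a 1 ^ 2) * t := by
    intro t ht ht1
    have hb : ∀ k : ℕ, 0 < k → (t ^ k) ^ 2 ≤ t ^ 2 := by
      intro k hk
      have h1 : t ^ k ≤ t := (pow_le_pow_of_le_one ht ht1 hk).trans_eq (pow_one t)
      exact pow_le_pow_left₀ (by positivity) h1 2
    have hsum : (t ^ (![w₁, w₂]) 0 * a 0) ^ 2 + (t ^ (![w₁, w₂]) 1 * a 1) ^ 2
        ≤ t ^ 2 * (a 0 ^ 2 + a 1 ^ 2) := by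
      rw [hw0, hw1]
      have h0 := hb w₁ hw₁
      have h1 := hb w₂ hw₂
      nlinarith [sq_nonneg (a 0), sq_nonneg (a 1), sq_nonneg (t ^ w₁), sq_nonneg (t ^ w₂)]
    have heq : eNorm (fun j => t ^ (![w₁, w₂]) j * a j)
        = Real.sqrt ((t ^ (![w₁, w₂]) 0 * a 0) ^ 2 + (t ^ (![w₁, w₂]) 1 * a 1) ^ 2) := by
      unfold eNorm
      rw [Fin.sum_univ_two]
    rw [heq]
    calc Real.sqrt ((t ^ (![w₁, w₂]) 0 * a 0) ^ 2 + (t ^ (![w₁, w₂]) 1 * a 1) ^ 2)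
        ≤ Real.sqrt (t ^ 2 * (a 0 ^ 2 + a 1 ^ 2)) := Real.sqrt_le_sqrt hsum
      _ = Real.sqrt (a 0 ^ 2 + a 1 ^ 2) * t := by
          rw [Real.sqrt_mul (by positivity), Real.sqrt_sq ht]
          ring
  -- the case split: a lower bound K * t ^ p for C * eNorm ^ lam
  have key : ∃ K, 0 < K ∧ ∃ p : ℝ, p < δ ∧
      (∀ᶠ t in nhdsWithin (0:ℝ) (Set.Ioi 0),
        K * t ^ p ≤ C * eNorm (fun j => t ^ (![w₁, w₂]) j * a j) ^ lam) := by
    rcases le_or_gt 0 lam with hl | hl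
    · have ha1p : (0:ℝ) < |a 1| ^ lam := Real.rpow_pos_of_pos (abs_pos.mpr ha1) lam
      refine ⟨C * |a 1| ^ lam, mul_pos hC ha1p, (w₂:ℝ) * lam, ?_, ?_⟩
      · have h1 : lam * (w₂:ℝ) < δ := (lt_div_iff₀ (by positivity)).mp hlam
        linarith
      · filter_upwards [hposev] with t ht
        have hlow := hlowAll t ht.le
        have hnn : 0 ≤ t ^ w₂ * |a 1| := by positivity
        have hr : (t ^ w₂ * |a 1|) ^ lam
            ≤ eNorm (fun j => t ^ (![w₁, w₂]) j * a j) ^ lam :=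
          Real.rpow_le_rpow hnn hlow hl
        have heq : (t ^ w₂ * |a 1|) ^ lam = t ^ ((w₂:ℝ) * lam) * |a 1| ^ lam := by
          rw [Real.mul_rpow (by positivity) (abs_nonneg _),
            ← Real.rpow_natCast t w₂, ← Real.rpow_mul ht.le]
        calc C * |a 1| ^ lam * t ^ ((w₂:ℝ) * lam)
            = C * ((t ^ w₂ * |a 1|) ^ lam) := by rw [heq]; ring
          _ ≤ _ := mul_le_mul_of_nonneg_left hr hC.le
    · set R := Real.sqrt (a 0 ^ 2 + a 1 ^ 2) with hR
      have hRpos : 0 < R := Real.sqrt_pos.mpr (by nlinarith [sq_nonneg (a 0), abs_pos.mpr ha1, sq_abs (a 1), pow_pos (abs_pos.mpr ha1) 2])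
      have hRl : (0:ℝ) < R ^ lam := Real.rpow_pos_of_pos hRpos lam
      refine ⟨C * R ^ lam, mul_pos hC hRl, lam, by linarith, ?_⟩
      filter_upwards [hposev, hlt1] with t ht ht1
      have hup := hupAll t ht.le ht1.le
      have hlow := hlowAll t ht.le
      have hEpos : 0 < eNorm (fun j => t ^ (![w₁, w₂]) j * a j) :=
        lt_of_lt_of_le (by positivity) hlow
      have hr : (R * t) ^ lam ≤ eNorm (fun j => t ^ (![w₁, w₂]) j * a j) ^ lam :=
        Real.rpow_le_rpow_of_nonpos hEpos hup hl.le
      have heq : (R * t) ^ lam = R ^ lam * t ^ lam :=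
        Real.mul_rpow hRpos.le ht.le
      calc C * R ^ lam * t ^ lam = C * ((R * t) ^ lam) := by rw [heq]; ring
        _ ≤ _ := mul_le_mul_of_nonneg_left hr hC.le
  obtain ⟨K, hK, p, hpδ, hbound⟩ := key
  have hev : ∀ᶠ t in nhdsWithin (0:ℝ) (Set.Ioi 0), K ≤ |eval a (pderiv 1 f)| * t ^ (δ - p) := by
    filter_upwards [hmem, hbound, hposev] with t htU hb ht
    have hLoj := hloj _ htU
    -- compute gradNorm along the curve
    have hE0 : eval (fun j => t ^ (![w₁, w₂]) j * a j) (pderiv 0 f) = 0 := by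
      have hid := eval_pderiv_wscale hhom t a 0
      rw [ha0, mul_zero] at hid
      exact (mul_eq_zero.mp hid).resolve_left (pow_ne_zero _ ht.ne')
    have hid1 := eval_pderiv_wscale hhom t a 1
    rw [hw1] at hid1
    set E := eval (fun j => t ^ (![w₁, w₂]) j * a j) (pderiv 1 f) with hE
    set c := eval a (pderiv 1 f) with hcdef
    have habs : t ^ w₂ * |E| = t ^ d * |c| := by
      calc t ^ w₂ * |E| = |t ^ w₂ * E| := by
            rw [abs_mul, abs_of_nonneg (pow_nonneg ht.le _)]
        _ = |t ^ d * c| := by rw [hid1]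
        _ = t ^ d * |c| := by rw [abs_mul, abs_of_nonneg (pow_nonneg ht.le _)]
    have hEabs : |E| = |c| * t ^ δ := by
      have ht2 : (t:ℝ) ^ w₂ ≠ 0 := pow_ne_zero _ ht.ne'
      have hrp : t ^ δ = t ^ (d:ℕ) / t ^ (w₂:ℕ) := by
        rw [hδdef, Real.rpow_sub ht, Real.rpow_natCast, Real.rpow_natCast]
      rw [hrp]
      field_simp
      linarith [habs]
    have hgr : gradNorm f (fun j => t ^ (![w₁, w₂]) j * a j) = |c| * t ^ δ := by
      unfold gradNorm
      rw [Fin.sum_univ_two, hE0, ← hE]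
      rw [show (0:ℝ) ^ 2 + E ^ 2 = E ^ 2 by ring]
      rw [Real.sqrt_sq_eq_abs, hEabs]
    rw [hgr] at hLoj
    exact div_step ht (le_trans hb hLoj)
  exact no_small K _ (δ - p) hK (by linarith) hev

theorem stmt9 (d w₁ w₂ : ℕ) (hd : 0 < d) (hw₁ : 0 < w₁) (hw₂ : 0 < w₂)
    (f : MvPolynomial (Fin 2) ℝ)
    (hhom : IsWeightedHomog f ![w₁, w₂] d)
    (hnd : Nondeg f)
    (ha : ∃ a : Fin 2 → ℝ, a 1 ≠ 0 ∧ eval a (pderiv 0 f) = 0) :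
    (∀ lam : ℝ, lam < ((d : ℝ) - w₂) / w₂ → ¬ LojIneq f lam) ∧
    (d : ℝ) / w₂ - 1 ≤ lojExp f := by
  obtain ⟨a, ha1, ha0⟩ := ha
  have hw : ∀ i : Fin 2, 0 < (![w₁, w₂]) i := by
    intro i; fin_cases i <;> simpa
  by_cases hc : eval a (pderiv 1 f) = 0
  · exfalso
    have hane : a ≠ 0 := fun h => ha1 (by rw [h]; rfl)
    refine grad_ne_zero hw hhom hnd hane ?_
    intro i
    fin_cases i
    · exact ha0
    · exact hc
  · have hP1 : ∀ lam : ℝ, lam < ((d : ℝ) - w₂) / w₂ → ¬ LojIneq f lam :=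
      fun lam hlam => part1lemma d w₁ w₂ hd hw₁ hw₂ f hhom hnd a ha1 ha0 hc lam hlam
    refine ⟨hP1, ?_⟩
    have hLd : LojIneq f (d : ℝ) := loj_homog d w₁ w₂ hd hw₁ hw₂ f hhom hnd
    have hne : Set.Nonempty {lam : ℝ | 0 < lam ∧ LojIneq f lam} :=
      ⟨(d : ℝ), by exact_mod_cast hd, hLd⟩
    have hw₂r : ((w₂:ℝ)) ≠ 0 := Nat.cast_ne_zero.mpr hw₂.ne'
    have heq : (d : ℝ) / w₂ - 1 = ((d : ℝ) - w₂) / w₂ := by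
      field_simp
    rw [lojExp, heq]
    refine le_csInf hne ?_
    rintro lam ⟨hpos, hloj⟩
    by_contra hlt
    push_neg at hlt
    exact hP1 lam hlt hloj
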